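/- Assume the standing assumptions. If λ ∈ ℂ with λ ≠ 0, λ ≠ b, λ ≠ −b, and ψ ∈ H with ψ ≠ 0 satisfy Uψ = λψ, then dψ ≠ 0 (so that φ_{a,b}(λ) is an eigenvalue of T), and moreover either λ is real (Im λ = 0) or |λ|² = −a·b. -/

import Mathlib

open ContinuousLinearMap

/-- Under the standing assumptions, if `Uψ = λψ` with `ψ ≠ 0`,
`λ ≠ 0`, `λ ≠ ±b`, then `dψ ≠ 0` (so `φ_{a,b}(λ)` is an eigenvalue of `T`), and
either `Im λ = 0` or `|λ|² = −ab`. -/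
theorem stmt_7 {H K : Type*}
    [NormedAddCommGroup H] [InnerProductSpace ℂ H] [CompleteSpace H] [Nontrivial H]
    [NormedAddCommGroup K] [InnerProductSpace ℂ K] [CompleteSpace K] [Nontrivial K]
    (a b : ℝ)
    (d : H →L[ℂ] K) (hd : d ∘L (adjoint d) = 1)
    (S : H →L[ℂ] H) (hS : IsSelfAdjoint S) (hS2 : S ∘L S = 1)
    (C : H →L[ℂ] H)
    (hC : C = (a : ℂ) • ((adjoint d) ∘L d) + (b : ℂ) • (1 - (adjoint d) ∘L d))
    (U : H →L[ℂ] H) (hU : U = S ∘L C)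
    (T : K →L[ℂ] K) (hT : T = d ∘L S ∘L (adjoint d))
    (h1 : (adjoint d) ∘L d ≠ 1) (h2 : S ≠ 1) (h3 : S ≠ -1)
    (h4 : a ≠ b) (h5 : a ≠ -b) (h6 : a * b ≠ 0)
    (lam : ℂ) (hlam0 : lam ≠ 0) (hlamb : lam ≠ (b : ℂ)) (hlamb' : lam ≠ -(b : ℂ))
    (ψ : H) (hψ0 : ψ ≠ 0) (hψ : U ψ = lam • ψ) :
    d ψ ≠ 0 ∧
    T (d ψ) = ((lam - (a * b : ℝ) * lam⁻¹) / ((a : ℂ) - (b : ℝ))) • d ψ ∧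
    (lam.im = 0 ∨ ‖lam‖ ^ 2 = -(a * b)) := by
  have hbne : b ≠ 0 := fun h => h6 (by simp [h])
  have hane : a ≠ 0 := fun h => h6 (by simp [h])
  have hab : (a : ℂ) - (b : ℂ) ≠ 0 := by
    intro h
    exact h4 (by exact_mod_cast sub_eq_zero.mp h)
  have hdd : ∀ x : K, d (adjoint d x) = x := fun x => by
    have := congrArg (fun f : K →L[ℂ] K => f x) hd
    simpa using this
  have hSS : ∀ x : H, S (S x) = x := fun x => by
    have := congrArg (fun f : H →L[ℂ] H => f x) hS2
    simpa using this
  have hCψ : C ψ = lam • S ψ := by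
    have h : S (C ψ) = lam • ψ := by
      rw [hU] at hψ; simpa using hψ
    calc C ψ = S (S (C ψ)) := (hSS _).symm
    _ = S (lam • ψ) := by rw [h]
    _ = lam • S ψ := by simp
  have hCexp : (a:ℂ) • (adjoint d (d ψ)) + (b:ℂ) • (ψ - adjoint d (d ψ)) = lam • S ψ := by
    rw [← hCψ, hC]; simp
  -- Part 1
  have hdψ : d ψ ≠ 0 := by
    intro h0
    have hP : adjoint d (d ψ) = 0 := by rw [h0]; simp
    have e1 : (b:ℂ) • ψ = lam • S ψ := by
      have := hCexp; rw [hP] at this; simpa using this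
    have e2 : (b:ℂ) • S ψ = lam • ψ := by
      have := congrArg S e1
      simpa [map_smul, hSS] using this
    have e3 : (lam*lam) • ψ = ((b:ℂ)*(b:ℂ)) • ψ := by
      calc (lam*lam) • ψ = lam • (lam • ψ) := by rw [mul_smul]
      _ = lam • ((b:ℂ) • S ψ) := by rw [e2]
      _ = (b:ℂ) • (lam • S ψ) := smul_comm _ _ _
      _ = (b:ℂ) • ((b:ℂ) • ψ) := by rw [← e1]
      _ = ((b:ℂ)*(b:ℂ)) • ψ := by rw [mul_smul]
    have e4 : lam * lam = (b:ℂ) * (b:ℂ) := by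
      have h' : (lam*lam - (b:ℂ)*(b:ℂ)) • ψ = 0 := by
        rw [sub_smul, e3, sub_self]
      rcases smul_eq_zero.mp h' with h | h
      · exact sub_eq_zero.mp h
      · exact absurd h hψ0
    have hfac : (lam - (b:ℂ)) * (lam + (b:ℂ)) = 0 := by linear_combination e4
    rcases mul_eq_zero.mp hfac with h | h
    · exact hlamb (sub_eq_zero.mp h)
    · exact hlamb' (eq_neg_of_add_eq_zero_left h)
  -- Part 2
  set v := d ψ with hv
  set w := d (S ψ) with hw
  set u := d (S (adjoint d v)) with hu
  have hTu : T v = u := by rw [hT]; simp [hu]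
  have h2a : lam • w = (a:ℂ) • v := by
    have := congrArg d hCexp
    simpa [map_add, map_smulₛₗ, map_sub, hdd, hw, hv] using this.symm
  have h2b : (a:ℂ) • u + (b:ℂ) • (w - u) = lam • v := by
    have := congrArg (fun x => d (S x)) hCexp
    simpa [map_add, map_smulₛₗ, map_sub, hSS, hu, hw, hv] using this
  have hscal : (((a:ℂ)-b) * lam) • u = (lam*lam - (a:ℂ)*b) • v := by
    linear_combination (norm := module) lam • h2b - (b:ℂ) • h2a
  have habl : ((a:ℂ)-b) * lam ≠ 0 := mul_ne_zero hab hlam0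
  have hu2 : u = ((lam*lam - (a:ℂ)*b) / (((a:ℂ)-b)*lam)) • v := by
    calc u = ((((a:ℂ)-b)*lam)⁻¹) • ((((a:ℂ)-b)*lam) • u) := (inv_smul_smul₀ habl u).symm
    _ = ((((a:ℂ)-b)*lam)⁻¹) • ((lam*lam - (a:ℂ)*b) • v) := by rw [hscal]
    _ = ((lam*lam - (a:ℂ)*b) / (((a:ℂ)-b)*lam)) • v := by
        rw [smul_smul, div_eq_inv_mul]
  have hTeq : T v = ((lam - ((a:ℝ)*b : ℝ) * lam⁻¹) / ((a:ℂ) - (b:ℝ))) • v := by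
    rw [hTu, hu2]
    congr 1
    push_cast
    rw [div_eq_div_iff habl hab]
    linear_combination ((a:ℂ)*b*((a:ℂ)-b)) * inv_mul_cancel₀ hlam0
  refine ⟨hdψ, hTeq, ?_⟩
  -- Part 3
  have hTsa : IsSelfAdjoint T := by
    rw [hT, isSelfAdjoint_iff']
    rw [adjoint_comp, adjoint_comp, adjoint_adjoint, hS.adjoint_eq]
    rfl
  have hvv : (inner ℂ v v : ℂ) ≠ 0 := inner_self_ne_zero.mpr hdψ
  have hsym : (inner ℂ (T v) v : ℂ) = inner ℂ v (T v) := hTsa.isSymmetric v v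
  rw [hTeq, inner_smul_left, inner_smul_right] at hsym
  have hconj : (starRingEnd ℂ) ((lam - ((a:ℝ)*b : ℝ) * lam⁻¹) / ((a:ℂ) - (b:ℝ)))
      = (lam - ((a:ℝ)*b : ℝ) * lam⁻¹) / ((a:ℂ) - (b:ℝ)) := mul_right_cancel₀ hvv hsym
  have hc : (starRingEnd ℂ) lam ≠ 0 := by simpa using hlam0
  have key0 : ((a:ℂ)-b) * (((starRingEnd ℂ) lam - lam) * (lam * (starRingEnd ℂ) lam + ((a:ℂ)*b))) = 0 := by
    simp only [map_div₀, map_sub, map_mul, map_inv₀, Complex.conj_ofReal] at hconj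
    field_simp at hconj
    push_cast at hconj
    linear_combination ((a:ℂ)-b) * hconj
  have key := (mul_eq_zero.mp key0).resolve_left hab
  rcases mul_eq_zero.mp key with h | h
  · left
    exact Complex.conj_eq_iff_im.mp (sub_eq_zero.mp h)
  · right
    have hns : (Complex.normSq lam : ℂ) = ((-(a*b) : ℝ) : ℂ) := by
      rw [← Complex.mul_conj]
      push_cast
      linear_combination h
    have h2 := Complex.ofReal_inj.mp hns
    rw [Complex.sq_norm]
    linarith [h2]
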